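/- arXiv:2006.11170 — 5 statements merged into one kernel-verified Lean document; each statement's English description precedes it below -/
import Mathlib

section
/- Let Θ be a nonempty set indexing probability measures (P_θ)_{θ∈Θ} on a measurable space 𝒳, let d : Θ × Θ → [0,∞), and let f : ℕ → (0,∞) be nonincreasing with f(2n)/f(n) ≥ C₀ for all n ∈ ℕ, for some constant C₀ > 0. Suppose there is an estimator θ̂ = (θ̂_n)_{n∈ℕ} (each θ̂_n : 𝒳ⁿ → Θ such that d(θ, θ̂_n(X^n)) is measurable) and a constant C′ > 0 such that for every n ∈ ℕ and every θ ∈ Θ, E_{X^n ∼ P_θ^{⊗n}}[d(θ, θ̂_n(X^n))] ≤ C′·f(n). Define the modified estimator θ̂′_n(x_1,…,x_n) = θ̂_{2^{⌊log₂ n⌋}}(x_1,…,x_{2^{⌊log₂ n⌋}}). Then for every α > 0 there exists a constant C″ > 0 such that for every θ ∈ Θ, E_{X^∞ ∼ P_θ^{⊗ℕ}}[ sup_{n∈ℕ} d(θ, θ̂′_n(X^n)) / ( (⌊log₂ n⌋ + 1)^{1+α} · f(n) ) ] ≤ C″. In particular, the strongly adversarial time-robust minimax rate is bounded by a constant times f(n)·log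 n for n ≥ 2. -/
open MeasureTheory ProbabilityTheory Filter

lemma map_fin_pi_of_iid {𝒳 Ω : Type} [m𝒳 : MeasurableSpace 𝒳] [mΩ : MeasurableSpace Ω]
    (Q : Measure Ω) [IsProbabilityMeasure Q] (μ : Measure 𝒳)
    (X : ℕ → Ω → 𝒳) (hX : ∀ i, Measurable (X i))
    (hind : iIndepFun X Q)
    (hmap : ∀ i, Measure.map (X i) Q = μ) (n : ℕ) :
    Measure.map (fun ω (i : Fin n) => X i.val ω) Q = Measure.pi (fun _ => μ) := by
  have hμ : IsProbabilityMeasure μ := by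
    rw [← hmap 0]; exact Measure.isProbabilityMeasure_map (hX 0).aemeasurable
  have hT : Measurable fun ω (i : Fin n) => X i.val ω :=
    measurable_pi_lambda _ fun i => hX i.val
  refine (Measure.pi_eq fun s hs => ?_).symm
  rw [Measure.map_apply hT (MeasurableSet.univ_pi hs)]
  classical
  set sets : ℕ → Set 𝒳 := fun i => if h : i < n then s ⟨i, h⟩ else Set.univ with hsets
  have hsetsmeas : ∀ i, i ∈ Finset.range n → MeasurableSet (sets i) := by
    intro i hi
    simp only [hsets]
    split
    · exact hs _
    · exact MeasurableSet.univ
  have hpre : (fun ω (i : Fin n) => X i.val ω) ⁻¹' Set.pi Set.univ s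
      = ⋂ i ∈ Finset.range n, X i ⁻¹' sets i := by
    ext ω
    simp only [Set.mem_preimage, Set.mem_pi, Set.mem_univ, true_implies,
      Set.mem_iInter, Finset.mem_range]
    constructor
    · intro h i hi
      simp only [hsets, dif_pos hi]; exact h ⟨i, hi⟩
    · intro h i
      have := h i.val i.isLt
      simpa only [hsets, dif_pos i.isLt] using this
  rw [hpre, hind.measure_inter_preimage_eq_mul (Finset.range n) hsetsmeas,
    ← Fin.prod_univ_eq_prod_range (fun i => Q (X i ⁻¹' sets i)) n]
  refine Finset.prod_congr rfl fun i _ => ?_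
  have hsi : sets i.val = s i := by simp only [hsets, dif_pos i.isLt]
  rw [hsi, ← hmap i.val, Measure.map_apply (hX i.val) (hs i)]

/-- if an estimator `est` achieves the rate `f` (nonincreasing, with
`f(2n)/f(n) ≥ C₀`) for a loss `d` at every fixed sample size, then the modified estimator
`x ↦ est (2 ^ ⌊log₂ n⌋) x` achieves, up to any factor `(⌊log₂ n⌋ + 1)^{1+α}`, the rate `f`
uniformly in time: the expectation of the supremum over all sample sizes of the normalized
loss is bounded by a constant `C''`. -/
theorem time_robust_rate_log_factor_upper_bound
    (𝒳 Θ : Type) [m𝒳 : MeasurableSpace 𝒳] [Nonempty Θ]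
    (P : Θ → Measure 𝒳) (hP : ∀ θ, IsProbabilityMeasure (P θ))
    (d : Θ → Θ → ℝ) (hd : ∀ θ θ', 0 ≤ d θ θ')
    (f : ℕ → ℝ) (hfpos : ∀ n, 0 < f n) (hfanti : Antitone f)
    (C₀ : ℝ) (hC₀ : 0 < C₀) (hfC₀ : ∀ n, C₀ * f n ≤ f (2 * n))
    (est : (n : ℕ) → (Fin n → 𝒳) → Θ)
    (hestmeas : ∀ θ n, Measurable fun x : Fin n → 𝒳 => d θ (est n x))
    (C' : ℝ) (hC' : 0 < C')
    (hrisk : ∀ (θ : Θ) (n : ℕ),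
      ∫⁻ x, ENNReal.ofReal (d θ (est (n + 1) x)) ∂(Measure.pi fun _ : Fin (n + 1) => P θ)
        ≤ ENNReal.ofReal (C' * f (n + 1)))
    (α : ℝ) (hα : 0 < α) :
    ∃ C'' : ℝ, 0 < C'' ∧
      ∀ (θ : Θ) (Ω : Type) (_ : MeasurableSpace Ω) (Q : Measure Ω),
        IsProbabilityMeasure Q →
        ∀ X : ℕ → Ω → 𝒳, (∀ i, Measurable (X i)) →
          iIndepFun X Q →
          (∀ i, Measure.map (X i) Q = P θ) →
          ∫⁻ ω, ⨆ n : ℕ,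
              ENNReal.ofReal
                (d θ (est (2 ^ Nat.log 2 (n + 1)) fun i => X i.val ω)
                  / (((Nat.log 2 (n + 1) : ℝ) + 1) ^ ((1 : ℝ) + α) * f (n + 1))) ∂Q
            ≤ ENNReal.ofReal C'' := by
  classical
  have hsum0 : Summable (fun k : ℕ => 1 / ((k : ℝ)) ^ ((1:ℝ) + α)) :=
    Real.summable_one_div_nat_rpow.mpr (by linarith)
  have hsum : Summable (fun k : ℕ => 1 / ((k : ℝ) + 1) ^ ((1:ℝ) + α)) := by
    have := (summable_nat_add_iff 1).mpr hsum0
    simpa using this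
  set S : ℝ := ∑' k : ℕ, 1 / ((k : ℝ) + 1) ^ ((1:ℝ) + α) with hS
  have hSpos : 0 < S := Summable.tsum_pos hsum (fun k => by positivity) 0 (by positivity)
  refine ⟨(C' / C₀) * S, by positivity, ?_⟩
  intro θ Ω mΩ Q hQ X hXmeas hind hmap
  haveI := hQ
  set B : ℕ → ℝ := fun k => ((k : ℝ) + 1) ^ ((1:ℝ) + α) with hB
  have hBpos : ∀ k, 0 < B k := fun k => by rw [hB]; positivity
  set c : ℕ → ℝ := fun k => B k * (C₀ * f (2 ^ k)) with hc
  have hcpos : ∀ k, 0 < c k := fun k => by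
    have h1 := hfpos (2 ^ k); have h2 := hBpos k; rw [hc]; positivity
  have hT : ∀ m : ℕ, Measurable fun ω (i : Fin m) => X i.val ω := fun m =>
    measurable_pi_lambda _ fun i => hXmeas i.val
  set h : ℕ → Ω → ENNReal := fun k ω =>
    ENNReal.ofReal (d θ (est (2 ^ k) fun i : Fin (2 ^ k) => X i.val ω) / c k) with hh
  have hhmeas : ∀ k, Measurable (h k) := fun k =>
    ENNReal.measurable_ofReal.comp (((hestmeas θ (2 ^ k)).comp (hT (2 ^ k))).div_const _)
  have hpoint : ∀ ω, (⨆ n : ℕ,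
      ENNReal.ofReal
        (d θ (est (2 ^ Nat.log 2 (n + 1)) fun i => X i.val ω)
          / (((Nat.log 2 (n + 1) : ℝ) + 1) ^ ((1 : ℝ) + α) * f (n + 1))))
      ≤ ∑' k, h k ω := by
    intro ω
    refine iSup_le fun n => ?_
    set k := Nat.log 2 (n + 1) with hk
    refine le_trans ?_ (ENNReal.le_tsum k)
    refine ENNReal.ofReal_le_ofReal ?_
    have hfle : C₀ * f (2 ^ k) ≤ f (n + 1) := by
      have h1 : n + 1 < 2 ^ (k + 1) := Nat.lt_pow_succ_log_self (by norm_num) (n + 1)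
      have h2 : f (2 ^ (k + 1)) ≤ f (n + 1) := hfanti h1.le
      have heq : 2 * 2 ^ k = 2 ^ (k + 1) := by rw [pow_succ]; ring
      calc C₀ * f (2 ^ k) ≤ f (2 * 2 ^ k) := hfC₀ (2 ^ k)
        _ = f (2 ^ (k + 1)) := by rw [heq]
        _ ≤ f (n + 1) := h2
    have hnum : (0:ℝ) ≤ d θ (est (2 ^ k) fun i : Fin (2 ^ k) => X i.val ω) := hd _ _
    have hden : c k ≤ ((k : ℝ) + 1) ^ ((1 : ℝ) + α) * f (n + 1) := by
      rw [hc]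
      exact mul_le_mul_of_nonneg_left hfle (le_of_lt (hBpos k))
    exact div_le_div_of_nonneg_left hnum (hcpos k) hden
  have hmapT : ∀ m : ℕ, Measure.map (fun ω (i : Fin m) => X i.val ω) Q
      = Measure.pi (fun _ : Fin m => P θ) := fun m =>
    map_fin_pi_of_iid Q (P θ) X hXmeas hind hmap m
  have hint : ∀ k, ∫⁻ ω, h k ω ∂Q ≤ ENNReal.ofReal (C' * f (2 ^ k) / c k) := by
    intro k
    have h2k : 2 ^ k - 1 + 1 = 2 ^ k := Nat.sub_add_cancel Nat.one_le_two_pow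
    have hriskk : ∫⁻ x, ENNReal.ofReal (d θ (est (2 ^ k) x))
          ∂(Measure.pi fun _ : Fin (2 ^ k) => P θ)
        ≤ ENNReal.ofReal (C' * f (2 ^ k)) := by
      have := hrisk θ (2 ^ k - 1)
      rwa [h2k] at this
    have hchg : ∫⁻ ω, ENNReal.ofReal (d θ (est (2 ^ k) fun i : Fin (2 ^ k) => X i.val ω)) ∂Q
        = ∫⁻ x, ENNReal.ofReal (d θ (est (2 ^ k) x))
            ∂(Measure.pi fun _ : Fin (2 ^ k) => P θ) := by
      rw [← hmapT (2 ^ k),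
        lintegral_map (hestmeas θ (2 ^ k)).ennreal_ofReal (hT (2 ^ k))]
    calc ∫⁻ ω, h k ω ∂Q
        = ∫⁻ ω, ENNReal.ofReal (d θ (est (2 ^ k) fun i : Fin (2 ^ k) => X i.val ω))
            * (ENNReal.ofReal (c k))⁻¹ ∂Q := by
          simp_rw [hh, ENNReal.ofReal_div_of_pos (hcpos k), div_eq_mul_inv]
      _ = (∫⁻ ω, ENNReal.ofReal (d θ (est (2 ^ k) fun i : Fin (2 ^ k) => X i.val ω)) ∂Q)
            * (ENNReal.ofReal (c k))⁻¹ :=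
          lintegral_mul_const'' _
            ((ENNReal.measurable_ofReal.comp
              ((hestmeas θ (2 ^ k)).comp (hT (2 ^ k)))).aemeasurable)
      _ ≤ ENNReal.ofReal (C' * f (2 ^ k)) * (ENNReal.ofReal (c k))⁻¹ := by
          rw [hchg]
          exact mul_le_mul_left hriskk _
      _ = ENNReal.ofReal (C' * f (2 ^ k) / c k) := by
          rw [ENNReal.ofReal_div_of_pos (hcpos k), div_eq_mul_inv]
  have hterm : ∀ k, C' * f (2 ^ k) / c k = (C' / C₀) * (1 / B k) := by
    intro k
    have hf0 := (hfpos (2 ^ k)).ne'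
    have hB0 := (hBpos k).ne'
    have hC0 := hC₀.ne'
    rw [hc]
    field_simp
  refine le_trans (lintegral_mono hpoint) ?_
  calc ∫⁻ ω, ∑' k, h k ω ∂Q
      = ∑' k, ∫⁻ ω, h k ω ∂Q := lintegral_tsum fun k => (hhmeas k).aemeasurable
    _ ≤ ∑' k, ENNReal.ofReal (C' * f (2 ^ k) / c k) := ENNReal.tsum_le_tsum hint
    _ = ∑' k, ENNReal.ofReal ((C' / C₀) * (1 / B k)) := by simp_rw [hterm]
    _ = ENNReal.ofReal (∑' k, (C' / C₀) * (1 / B k)) :=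
        (ENNReal.ofReal_tsum_of_nonneg
          (fun k => by have := hBpos k; positivity) (by rw [hB]; exact hsum.mul_left _)).symm
    _ = ENNReal.ofReal ((C' / C₀) * S) := by rw [tsum_mul_left, hB, ← hS]
end

section
/- Let (U_n)_{n∈ℕ} be a nonnegative supermartingale with respect to a filtration (𝓕_n)_{n∈ℕ} on a probability space (Ω, 𝓐, P), with E[U_1] ≤ 1. Then E[ sup_{n∈ℕ} √(U_n) / 2 ] ≤ 1. -/
open MeasureTheory ProbabilityTheory Filter

section Aux
open Finset Set
open scoped NNReal ENNReal

theorem ville_fin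
    {Ω : Type} [mΩ : MeasurableSpace Ω] {P : Measure Ω} [IsProbabilityMeasure P]
    {ℱ : Filtration ℕ mΩ} {U : ℕ → Ω → ℝ}
    (hU : Supermartingale U ℱ P) (hpos : ∀ n, 0 ≤ᵐ[P] U n)
    (ε : ℝ≥0) (N : ℕ) :
    (ε : ℝ≥0∞) * P {ω | (ε : ℝ) ≤ (Finset.range (N+1)).sup' nonempty_range_add_one fun k => U k ω}
      ≤ ENNReal.ofReal (∫ ω, U 0 ω ∂P) := by
  set τ : Ω → WithTop ℕ := fun ω => WithTop.some (hittingBtwn U {y : ℝ | (ε:ℝ) ≤ y} 0 N ω) with hτdef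
  have hτ : IsStoppingTime ℱ τ := hU.stronglyAdapted.adapted.isStoppingTime_hittingBtwn measurableSet_Ici
  have hτle : ∀ ω, τ ω ≤ N := fun ω => WithTop.coe_le_coe.2 (hittingBtwn_le ω)
  have hsubneg : Submartingale (-U) ℱ P := hU.neg
  have hint : Integrable (stoppedValue U τ) P := by
    have := hsubneg.integrable_stoppedValue hτ hτle
    have h2 : stoppedValue (-U) τ = -(stoppedValue U τ) := by
      ext ω; simp [stoppedValue]
    rw [h2] at this
    simpa using this.neg
  -- nonneg a.e. of stopped value
  have hsvnn : 0 ≤ᵐ[P] stoppedValue U τ := by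
    have : ∀ᵐ ω ∂P, ∀ n, 0 ≤ U n ω := ae_all_iff.2 hpos
    filter_upwards [this] with ω hω
    exact hω (τ ω).untopA
  -- measurability of the set
  set A := {ω | (ε : ℝ) ≤ (Finset.range (N+1)).sup' nonempty_range_add_one fun k => U k ω} with hA
  have hAmeas : MeasurableSet A :=
    measurableSet_le measurable_const (Finset.measurable_range_sup'' fun n _ =>
      (hU.stronglyMeasurable n).measurable.le (ℱ.le n))
  -- pointwise lower bound on A
  have hptw : ∀ ω ∈ A, (ε : ℝ) ≤ stoppedValue U τ ω := by
    intro ω hω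
    simp_rw [hA, Set.mem_setOf_eq, Finset.le_sup'_iff, Finset.mem_range, Nat.lt_succ_iff] at hω
    refine stoppedValue_hittingBtwn_mem ?_
    simp only [Set.mem_setOf_eq, exists_prop]
    obtain ⟨j, hj₁, hj₂⟩ := hω
    exact ⟨j, ⟨by simp [hj₁], hj₂⟩⟩
  have h1 : (ε : ℝ≥0∞) * P A ≤ ENNReal.ofReal (∫ ω in A, stoppedValue U τ ω ∂P) := by
    have h := setIntegral_ge_of_const_le hAmeas (measure_ne_top _ _) hptw hint.integrableOn
    rw [ENNReal.le_ofReal_iff_toReal_le, ENNReal.toReal_mul]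
    · rw [mul_comm]; exact h
    · exact ENNReal.mul_ne_top (by simp) (measure_ne_top _ _)
    · exact le_trans (mul_nonneg ε.coe_nonneg ENNReal.toReal_nonneg) (by rw [mul_comm]; exact h)
  refine h1.trans (ENNReal.ofReal_le_ofReal ?_)
  have h2 : ∫ ω in A, stoppedValue U τ ω ∂P ≤ ∫ ω, stoppedValue U τ ω ∂P :=
    setIntegral_le_integral hint hsvnn
  refine h2.trans ?_
  -- optional stopping for supermartingale
  have h3 := hsubneg.expected_stoppedValue_mono (isStoppingTime_const ℱ 0) hτ
    (fun ω => WithTop.coe_le_coe.2 (Nat.zero_le _)) hτle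
  have e1 : stoppedValue (-U) (fun _ => WithTop.some (0:ℕ)) = fun ω => -(U 0 ω) := by
    ext ω; simp [stoppedValue]
  have e2 : stoppedValue (-U) τ = fun ω => -(stoppedValue U τ ω) := by
    ext ω; simp [stoppedValue]
  rw [e1, e2, integral_neg, integral_neg, neg_le_neg_iff] at h3
  exact h3

theorem ville_sup
    {Ω : Type} [mΩ : MeasurableSpace Ω] {P : Measure Ω} [IsProbabilityMeasure P]
    {ℱ : Filtration ℕ mΩ} {U : ℕ → Ω → ℝ}
    (hU : Supermartingale U ℱ P) (hpos : ∀ n, 0 ≤ᵐ[P] U n)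
    (ε : ℝ≥0) :
    P {ω | ∃ n, (ε : ℝ) ≤ U n ω} * (ε : ℝ≥0∞) ≤ ENNReal.ofReal (∫ ω, U 0 ω ∂P) := by
  set A : ℕ → Set Ω := fun N =>
    {ω | (ε : ℝ) ≤ (Finset.range (N+1)).sup' nonempty_range_add_one fun k => U k ω} with hA
  have hmono : Monotone A := by
    intro M N hMN ω hω
    simp only [hA, Set.mem_setOf_eq, Finset.le_sup'_iff, Finset.mem_range] at hω ⊢
    obtain ⟨j, hj, hj2⟩ := hω
    exact ⟨j, lt_of_lt_of_le hj (by omega), hj2⟩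
  have hUnion : {ω | ∃ n, (ε : ℝ) ≤ U n ω} = ⋃ N, A N := by
    ext ω
    simp only [Set.mem_setOf_eq, Set.mem_iUnion, hA, Finset.le_sup'_iff, Finset.mem_range]
    constructor
    · rintro ⟨n, hn⟩; exact ⟨n, n, Nat.lt_succ_self n, hn⟩
    · rintro ⟨N, j, _, hj⟩; exact ⟨j, hj⟩
  rw [hUnion, Directed.measure_iUnion hmono.directed_le, ENNReal.iSup_mul]
  exact iSup_le fun N => by rw [mul_comm]; exact ville_fin hU hpos ε N

end Aux

section Main
open Finset Set
open scoped NNReal ENNReal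

/-- if `(U n)` is a nonnegative supermartingale with `E[U 0] ≤ 1`
(a test supermartingale), then `E[sup_n √(U n) / 2] ≤ 1`. -/
theorem expectation_sup_sqrt_test_supermartingale
    (Ω : Type) [mΩ : MeasurableSpace Ω] (P : Measure Ω) [IsProbabilityMeasure P]
    (ℱ : Filtration ℕ mΩ) (U : ℕ → Ω → ℝ)
    (hU : Supermartingale U ℱ P) (hpos : ∀ n, 0 ≤ᵐ[P] U n)
    (hstart : ∫ ω, U 0 ω ∂P ≤ 1) :
    ∫⁻ ω, ⨆ n : ℕ, ENNReal.ofReal (Real.sqrt (U n ω) / 2) ∂P ≤ 1 := by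
  have hc : ENNReal.ofReal (∫ ω, U 0 ω ∂P) ≤ 1 := ENNReal.ofReal_le_one.mpr hstart
  set h : ℕ → Ω → ℝ := fun N ω =>
    (Finset.range (N+1)).sup' nonempty_range_add_one fun k => Real.sqrt (U k ω) / 2 with hh
  have hUmeas : ∀ k, Measurable (U k) := fun k => (hU.stronglyMeasurable k).measurable.le (ℱ.le k)
  have hhmeas : ∀ N, Measurable (h N) := fun N =>
    Finset.measurable_range_sup'' fun k _ =>
      ((Real.continuous_sqrt.measurable).comp (hUmeas k)).div_const 2
  have hhnn : ∀ N ω, 0 ≤ h N ω := fun N ω =>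
    (Finset.le_sup'_iff _).2 ⟨0, by simp, by positivity⟩
  have hptw : ∀ ω, (⨆ n : ℕ, ENNReal.ofReal (Real.sqrt (U n ω) / 2))
      = ⨆ N : ℕ, ENNReal.ofReal (h N ω) := by
    intro ω
    apply le_antisymm
    · refine iSup_le fun n => le_iSup_of_le n (ENNReal.ofReal_le_ofReal ?_)
      exact Finset.le_sup' (fun k => Real.sqrt (U k ω) / 2) (Finset.mem_range.2 n.lt_succ_self)
    · refine iSup_le fun N => ?_
      obtain ⟨k, hk, hkeq⟩ := Finset.exists_mem_eq_sup' (nonempty_range_add_one (n := N))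
        (fun k => Real.sqrt (U k ω) / 2)
      rw [hh]; dsimp only; rw [hkeq]
      exact le_iSup (fun n => ENNReal.ofReal (Real.sqrt (U n ω) / 2)) k
  rw [lintegral_congr hptw]
  have hmono : Monotone fun N ω => ENNReal.ofReal (h N ω) := by
    intro M N hMN ω
    refine ENNReal.ofReal_le_ofReal (Finset.sup'_le _ _ fun k hk => Finset.le_sup' (fun k => Real.sqrt (U k ω) / 2) ?_)
    simp only [Finset.mem_range] at hk ⊢; omega
  rw [lintegral_iSup (fun N => (hhmeas N).ennreal_ofReal) hmono]
  refine iSup_le fun N => ?_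
  -- layer cake
  rw [lintegral_eq_lintegral_meas_le P (ae_of_all _ (hhnn N)) (hhmeas N).aemeasurable]
  -- bound the tail probability
  have htail : ∀ t ∈ Ioi (0:ℝ), P {ω | t ≤ h N ω} ≤ min 1 (ENNReal.ofReal (4 * t^2))⁻¹ := by
    intro t ht
    simp only [Set.mem_Ioi] at ht
    refine le_min prob_le_one ?_
    have hsub : {ω | t ≤ h N ω} ⊆ {ω | ∃ n, (((4 * t^2).toNNReal : ℝ≥0) : ℝ) ≤ U n ω} := by
      intro ω hω
      simp only [Set.mem_setOf_eq, hh, Finset.le_sup'_iff] at hω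
      obtain ⟨k, _, hk⟩ := hω
      refine ⟨k, ?_⟩
      rw [Real.coe_toNNReal _ (by positivity)]
      have h2t : 2 * t ≤ Real.sqrt (U k ω) := by linarith
      have := (Real.le_sqrt' (by linarith)).1 h2t
      nlinarith [this]
    have hv := ville_sup hU hpos ((4 * t^2).toNNReal)
    have hcoe : (((4 * t^2).toNNReal : ℝ≥0) : ℝ≥0∞) = ENNReal.ofReal (4 * t^2) := rfl
    rw [ENNReal.le_inv_iff_mul_le]
    calc P {ω | t ≤ h N ω} * ENNReal.ofReal (4 * t^2)
        ≤ P {ω | ∃ n, (((4 * t^2).toNNReal : ℝ≥0) : ℝ) ≤ U n ω} * ENNReal.ofReal (4 * t^2) := by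
          exact mul_le_mul_left (measure_mono hsub) _
      _ ≤ ENNReal.ofReal (∫ ω, U 0 ω ∂P) := by rw [← hcoe]; exact hv
      _ ≤ 1 := hc
  calc ∫⁻ t in Ioi (0:ℝ), P {ω | t ≤ h N ω}
      ≤ ∫⁻ t in Ioi (0:ℝ), min 1 (ENNReal.ofReal (4 * t^2))⁻¹ :=
        setLIntegral_mono' measurableSet_Ioi htail
    _ ≤ (∫⁻ t in Ioc (0:ℝ) (1/2), min 1 (ENNReal.ofReal (4 * t^2))⁻¹)
        + ∫⁻ t in Ioi (1/2:ℝ), min 1 (ENNReal.ofReal (4 * t^2))⁻¹ := by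
        rw [← Ioc_union_Ioi_eq_Ioi (by norm_num : (0:ℝ) ≤ 1/2)]
        exact lintegral_union_le _ _ _
    _ ≤ 1 := by
        have h1 : (∫⁻ t in Ioc (0:ℝ) (1/2), min 1 (ENNReal.ofReal (4 * t^2))⁻¹) ≤ 1/2 := by
          calc (∫⁻ t in Ioc (0:ℝ) (1/2), min 1 (ENNReal.ofReal (4 * t^2))⁻¹)
              ≤ ∫⁻ _ in Ioc (0:ℝ) (1/2), 1 := lintegral_mono fun t => min_le_left _ _
            _ = ENNReal.ofReal (1/2) := by
                rw [setLIntegral_one, Real.volume_Ioc]; norm_num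
            _ = 1/2 := by
                rw [ENNReal.ofReal_div_of_pos (by norm_num)]; norm_num
        have h2 : (∫⁻ t in Ioi (1/2:ℝ), min 1 (ENNReal.ofReal (4 * t^2))⁻¹) ≤ 1/2 := by
          have key : ∀ t ∈ Ioi (1/2:ℝ),
              min 1 (ENNReal.ofReal (4 * t^2))⁻¹ ≤ ENNReal.ofReal ((4 * t^2)⁻¹) := fun t ht => by
            simp only [Set.mem_Ioi] at ht
            rw [ENNReal.ofReal_inv_of_pos (by nlinarith)]
            exact min_le_right _ _
          calc (∫⁻ t in Ioi (1/2:ℝ), min 1 (ENNReal.ofReal (4 * t^2))⁻¹)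
              ≤ ∫⁻ t in Ioi (1/2:ℝ), ENNReal.ofReal ((4 * t^2)⁻¹) :=
                setLIntegral_mono' measurableSet_Ioi key
            _ = ENNReal.ofReal (∫ t in Ioi (1/2:ℝ), (4 * t^2)⁻¹) := by
                rw [← ofReal_integral_eq_lintegral_ofReal]
                · have : IntegrableOn (fun t : ℝ => (4 * t^2)⁻¹) (Ioi (1/2:ℝ)) := by
                    have hi := integrableOn_Ioi_rpow_of_lt (by norm_num : (-2:ℝ) < -1)
                      (by norm_num : (0:ℝ) < 1/2)
                    have : IntegrableOn (fun t : ℝ => (1/4) * t ^ (-2:ℝ)) (Ioi (1/2:ℝ)) :=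
                      hi.const_mul _
                    refine this.congr_fun (fun t ht => ?_) measurableSet_Ioi
                    simp only [Set.mem_Ioi] at ht
                    beta_reduce
                    rw [Real.rpow_neg (by linarith), Real.rpow_two]
                    field_simp
                  exact this
                · filter_upwards [ae_restrict_mem measurableSet_Ioi] with t ht
                  positivity
            _ = 1/2 := by
                have heq : ∫ t in Ioi (1/2:ℝ), (4 * t^2)⁻¹
                    = ∫ t in Ioi (1/2:ℝ), (1/4) * t ^ (-2:ℝ) := by
                  refine setIntegral_congr_fun measurableSet_Ioi fun t ht => ?_
                  simp only [Set.mem_Ioi] at ht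
                  rw [Real.rpow_neg (by linarith), Real.rpow_two]
                  field_simp
                rw [heq, integral_const_mul, integral_Ioi_rpow_of_lt (by norm_num) (by norm_num)]
                norm_num
                rw [ENNReal.ofReal_div_of_pos (by norm_num)]
                norm_num
        calc _ ≤ (1/2 : ℝ≥0∞) + 1/2 := add_le_add h1 h2
          _ = 1 := ENNReal.add_halves 1

end Main
end

section
/- Let V be a random variable on a probability space (Ω, 𝓐, P) with V > 0 almost surely and P(V ≤ α) ≤ α for every α ∈ (0, 1]. Then E[ 1 / (2·√V) ] ≤ 1. -/
open MeasureTheory ProbabilityTheory Filter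
open Set ENNReal

lemma aux_rpow (t : ℝ) (ht : 0 < t) : 1/(4*t^2) = 1/4 * t ^ (-2:ℝ) := by
  rw [Real.rpow_neg ht.le, Real.rpow_two]
  field_simp

/-- if `V > 0` a.s. and `P(V ≤ α) ≤ α` for every `α ∈ (0,1]` (i.e. `V` is a
p-value variable), then `E[1/(2√V)] ≤ 1` (i.e. `1/(2√V)` is an E-variable). -/
theorem e_value_from_p_value
    (Ω : Type) [MeasurableSpace Ω] (P : Measure Ω) [IsProbabilityMeasure P]
    (V : Ω → ℝ) (hVmeas : Measurable V) (hVpos : ∀ᵐ ω ∂P, 0 < V ω)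
    (hp : ∀ α : ℝ, 0 < α → α ≤ 1 → P {ω | V ω ≤ α} ≤ ENNReal.ofReal α) :
    ∫⁻ ω, ENNReal.ofReal (1 / (2 * Real.sqrt (V ω))) ∂P ≤ 1 := by
  have f_nn : 0 ≤ᵐ[P] fun ω => 1 / (2 * Real.sqrt (V ω)) := by
    filter_upwards with ω
    positivity
  have f_mble : AEMeasurable (fun ω => 1 / (2 * Real.sqrt (V ω))) P :=
    ((hVmeas.sqrt.const_mul 2).const_div 1).aemeasurable
  rw [lintegral_eq_lintegral_meas_lt P f_nn f_mble]
  set g : ℝ → ℝ≥0∞ := fun t => if t ≤ 1/2 then 1 else ENNReal.ofReal (1/(4*t^2)) with hg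
  have hgmeas : Measurable g := by
    apply Measurable.ite (measurableSet_le measurable_id measurable_const)
    · exact measurable_const
    · exact (by fun_prop : Measurable fun t:ℝ => ENNReal.ofReal (1/(4*t^2)))
  have hbound : ∀ t ∈ Ioi (0:ℝ), P {a | t < 1 / (2 * Real.sqrt (V a))} ≤ g t := by
    intro t ht
    simp only [mem_Ioi] at ht
    by_cases hhalf : t ≤ 1/2
    · simp only [hg, if_pos hhalf]
      exact prob_le_one
    · push_neg at hhalf
      simp only [hg, if_neg (not_le.mpr hhalf)]
      have hα : (0:ℝ) < 1/(4*t^2) := by positivity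
      have hα1 : 1/(4*t^2) ≤ 1 := by
        rw [div_le_one (by positivity)]
        nlinarith
      refine le_trans ?_ (hp _ hα hα1)
      apply measure_mono_ae
      filter_upwards [hVpos] with ω hω hmem
      replace hmem : t < 1 / (2 * Real.sqrt (V ω)) := hmem
      show V ω ≤ 1/(4*t^2)
      have hs : 0 < Real.sqrt (V ω) := Real.sqrt_pos.mpr hω
      rw [lt_div_iff₀ (by positivity)] at hmem
      have h2 : Real.sqrt (V ω) < 1/(2*t) := by
        rw [lt_div_iff₀ (by positivity)]
        nlinarith
      have h3 := Real.sq_sqrt hω.le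
      have h4 : Real.sqrt (V ω) ^ 2 < (1/(2*t))^2 := by
        apply sq_lt_sq' _ h2
        nlinarith
      rw [h3] at h4
      have : (1/(2*t))^2 = 1/(4*t^2) := by field_simp; ring
      linarith [this ▸ h4]
  calc ∫⁻ t in Ioi (0:ℝ), P {a | t < 1 / (2 * Real.sqrt (V a))}
      ≤ ∫⁻ t in Ioi (0:ℝ), g t :=
        setLIntegral_mono_ae hgmeas.aemeasurable (ae_of_all _ hbound)
    _ = 1 := by
        have hsplit : (Ioi (0:ℝ)) = Ioc (0:ℝ) (1/2) ∪ Ioi (1/2) := by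
          rw [Ioc_union_Ioi_eq_Ioi]; norm_num
        rw [hsplit, lintegral_union measurableSet_Ioi Ioc_disjoint_Ioi_same]
        have h1 : ∫⁻ t in Ioc (0:ℝ) (1/2), g t = ENNReal.ofReal (1/2) := by
          have : ∫⁻ t in Ioc (0:ℝ) (1/2), g t = ∫⁻ _ in Ioc (0:ℝ) (1/2), (1:ℝ≥0∞) :=
            setLIntegral_congr_fun measurableSet_Ioc
              (fun t ht => by simp only [hg, if_pos ht.2])
          rw [this]
          simp [Real.volume_Ioc]
        have h2 : ∫⁻ t in Ioi (1/2:ℝ), g t = ENNReal.ofReal (1/2) := by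
          have he : ∫⁻ t in Ioi (1/2:ℝ), g t
              = ∫⁻ t in Ioi (1/2:ℝ), ENNReal.ofReal (1/(4*t^2)) :=
            setLIntegral_congr_fun measurableSet_Ioi
              (fun t ht => by
                simp only [mem_Ioi] at ht
                simp only [hg, if_neg (not_le.mpr ht)])
          rw [he]
          have hint : IntegrableOn (fun t:ℝ => 1/(4*t^2)) (Ioi (1/2)) := by
            have h := (integrableOn_Ioi_rpow_of_lt (by norm_num : (-2:ℝ) < -1)
              (by norm_num : (0:ℝ) < 1/2)).const_mul (1/4)
            apply (IntegrableOn.congr_fun (h : IntegrableOn _ _ _) ?_ measurableSet_Ioi)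
            intro t ht
            simp only [mem_Ioi] at ht
            exact (aux_rpow t (by linarith)).symm
          rw [← ofReal_integral_eq_lintegral_ofReal hint
            (ae_restrict_of_ae (ae_of_all _ (fun t => by positivity)))]
          congr 1
          have heq : ∫ t in Ioi (1/2:ℝ), 1/(4*t^2)
              = ∫ t in Ioi (1/2:ℝ), (1/4) * t^(-2:ℝ) := by
            apply setIntegral_congr_fun measurableSet_Ioi
            intro t ht
            simp only [mem_Ioi] at ht
            exact aux_rpow t (by linarith)
          rw [heq, integral_const_mul, integral_Ioi_rpow_of_lt (by norm_num) (by norm_num)]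
          rw [show (-2:ℝ) + 1 = -1 by norm_num, Real.rpow_neg_one]
          norm_num
        rw [h1, h2, ← ENNReal.ofReal_add (by norm_num) (by norm_num)]
        norm_num
end

section
/- Let k ∈ ℕ, σ > 0, δ > 0 and let Y_1, Y_2, … be i.i.d. random vectors in ℝ^k with mean μ = E[Y_1], satisfying: for every η ∈ ℝ^k with ‖η‖² ≤ δ, E[exp(⟨η, Y_1 − μ⟩)] ≤ exp(σ·⟨η,η⟩/2). Set S_n = Σ_{i=1}^n (Y_i − μ). Let γ be any probability measure on the closed ball B_δ(0) = {η ∈ ℝ^k : ‖η‖² ≤ δ}, and define Z_0 = 1 and Z_n = ∫_{B_δ(0)} exp(⟨η, S_n⟩ − n·σ·⟨η,η⟩/2) dγ(η) for n ≥ 1. Then (Z_n)_{n≥0} is a nonnegative supermartingale with respect to the filtration (σ(Y_1,…,Y_n))_{n≥0}, with Z_0 = 1. -/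
open MeasureTheory ProbabilityTheory Filter
open scoped RealInnerProductSpace ENNReal

/-- The natural filtration of the data: `natFilt Y hY n = σ(Y_0, …, Y_{n-1})`,
the σ-algebra generated by the first `n` observations. -/
noncomputable def natFilt {Ω β : Type*} [mΩ : MeasurableSpace Ω] [MeasurableSpace β]
    (Y : ℕ → Ω → β) (hY : ∀ i, Measurable (Y i)) : Filtration ℕ mΩ where
  seq n := ⨆ i ∈ Finset.range n, MeasurableSpace.comap (Y i) inferInstance
  mono' := fun _ _ hnm => biSup_mono fun _ hi =>
    Finset.mem_range.mpr (lt_of_lt_of_le (Finset.mem_range.mp hi) hnm)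
  le' _ := iSup₂_le fun i _ => (hY i).comap_le

private lemma aux_sm {k : ℕ} {Ω : Type} {m : MeasurableSpace Ω}
    (γ : Measure (EuclideanSpace ℝ (Fin k))) [SFinite γ]
    {G : Ω → EuclideanSpace ℝ (Fin k)} (hG : Measurable[m] G) (c : ℝ) :
    StronglyMeasurable[m] fun ω => ∫ η, Real.exp (⟪η, G ω⟫ - c * ⟪η, η⟫ / 2) ∂γ := by
  have h : Measurable[m.prod inferInstance] fun p : Ω × EuclideanSpace ℝ (Fin k) =>
      Real.exp (⟪p.2, G p.1⟫ - c * ⟪p.2, p.2⟫ / 2) := by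
    have h1 : Measurable[m.prod inferInstance] fun p : Ω × EuclideanSpace ℝ (Fin k) =>
        ⟪p.2, G p.1⟫ := Measurable.inner measurable_snd (hG.comp measurable_fst)
    have h2 : Measurable[m.prod inferInstance] fun p : Ω × EuclideanSpace ℝ (Fin k) =>
        ⟪p.2, p.2⟫ := Measurable.inner measurable_snd measurable_snd
    exact Real.measurable_exp.comp (h1.sub ((h2.const_mul c).div_const 2))
  exact h.stronglyMeasurable.integral_prod_right'

/-- with `Y 0, Y 1, …` i.i.d. in `ℝ^k` with mean `μ` and sub-Gaussian mgf on the
ball `‖η‖² ≤ δ`, `S n = Σ_{i<n} (Y i - μ)`, and `γ` any probability measure on that ball,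
the process `Z n = ∫ exp(⟨η, S n⟩ - nσ⟨η,η⟩/2) dγ(η)` is a nonnegative supermartingale with
respect to the natural filtration of `Y`, with `Z 0 = 1` (a test supermartingale). -/
theorem mixture_is_test_supermartingale
    (k : ℕ) (σ δ : ℝ) (hσ : 0 < σ) (hδ : 0 < δ)
    (Ω : Type) [mΩ : MeasurableSpace Ω] (P : Measure Ω) [IsProbabilityMeasure P]
    (Y : ℕ → Ω → EuclideanSpace ℝ (Fin k)) (hY : ∀ i, Measurable (Y i))
    (hindep : iIndepFun Y P)
    (hident : ∀ i, Measure.map (Y i) P = Measure.map (Y 0) P)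
    (μ : EuclideanSpace ℝ (Fin k)) (hint : Integrable (Y 0) P) (hμ : μ = ∫ ω, Y 0 ω ∂P)
    (hmgf : ∀ η : EuclideanSpace ℝ (Fin k), ‖η‖ ^ 2 ≤ δ →
      ∫⁻ ω, ENNReal.ofReal (Real.exp ⟪η, Y 0 ω - μ⟫) ∂P
        ≤ ENNReal.ofReal (Real.exp (σ * ⟪η, η⟫ / 2)))
    (γ : Measure (EuclideanSpace ℝ (Fin k))) [IsProbabilityMeasure γ]
    (hγ : ∀ᵐ η ∂γ, ‖η‖ ^ 2 ≤ δ)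
    (S : ℕ → Ω → EuclideanSpace ℝ (Fin k))
    (hS : S = fun n ω => ∑ i ∈ Finset.range n, (Y i ω - μ))
    (Z : ℕ → Ω → ℝ)
    (hZ : Z = fun n ω => ∫ η, Real.exp (⟪η, S n ω⟫ - n * σ * ⟪η, η⟫ / 2) ∂γ) :
    Supermartingale Z (natFilt Y hY) P ∧ (∀ n ω, 0 ≤ Z n ω) ∧ ∀ ω, Z 0 ω = 1 := by
  set F := natFilt Y hY with hF
  set f : ℕ → EuclideanSpace ℝ (Fin k) → Ω → ℝ≥0∞ :=
    fun n η ω => ENNReal.ofReal (Real.exp (⟪η, S n ω⟫ - n * σ * ⟪η, η⟫ / 2)) with hfdef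
  -- basic facts
  have hZnn : ∀ n ω, 0 ≤ Z n ω := by
    intro n ω; rw [hZ]; exact integral_nonneg fun η => (Real.exp_pos _).le
  have hZ0 : ∀ ω, Z 0 ω = 1 := by
    intro ω; rw [hZ]; simp [hS]
  -- measurability of S
  have hSmeas : ∀ n, Measurable[F n] (S n) := by
    intro n
    simp only [hS]
    refine Finset.measurable_sum _ fun i hi => ?_
    have h1 : MeasurableSpace.comap (Y i) inferInstance ≤ F n :=
      le_biSup (fun i => MeasurableSpace.comap (Y i) inferInstance) hi
    exact ((Measurable.of_comap_le le_rfl).mono h1 le_rfl).sub measurable_const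
  have hSmeas' : ∀ n, Measurable (S n) := fun n => (hSmeas n).mono (F.le n) le_rfl
  -- measurability of f
  have hfmeasF : ∀ n η, Measurable[F n] (f n η) := by
    intro n η
    exact ENNReal.measurable_ofReal.comp (Real.measurable_exp.comp
      ((Measurable.inner measurable_const (hSmeas n)).sub measurable_const))
  have hfmeas : ∀ n η, Measurable (f n η) := fun n η => (hfmeasF n η).mono (F.le n) le_rfl
  have hjoint : ∀ n, Measurable fun p : Ω × EuclideanSpace ℝ (Fin k) => f n p.2 p.1 := by
    intro n
    have h1 : Measurable fun p : Ω × EuclideanSpace ℝ (Fin k) => ⟪p.2, S n p.1⟫ :=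
      Measurable.inner measurable_snd ((hSmeas' n).comp measurable_fst)
    have h2 : Measurable fun p : Ω × EuclideanSpace ℝ (Fin k) => ⟪p.2, p.2⟫ :=
      Measurable.inner measurable_snd measurable_snd
    exact ENNReal.measurable_ofReal.comp (Real.measurable_exp.comp
      (h1.sub (((h2.const_mul ((n : ℝ) * σ)).div_const 2))))
  -- Z as toReal of lintegral
  have hZeq : ∀ n ω, Z n ω = (∫⁻ η, f n η ω ∂γ).toReal := by
    intro n ω
    have hcont : Continuous fun η : EuclideanSpace ℝ (Fin k) =>
        Real.exp (⟪η, S n ω⟫ - (n : ℝ) * σ * ⟪η, η⟫ / 2) :=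
      Real.continuous_exp.comp ((continuous_id.inner continuous_const).sub
        ((continuous_const.mul (continuous_id.inner continuous_id)).div_const 2))
    simp only [hZ]
    rw [integral_eq_lintegral_of_nonneg_ae (Eventually.of_forall fun η => (Real.exp_pos _).le)
      hcont.aestronglyMeasurable]
  -- step identity
  have hstep : ∀ (n : ℕ) η ω, f (n + 1) η ω
      = f n η ω * ENNReal.ofReal (Real.exp (⟪η, Y n ω - μ⟫ - σ * ⟪η, η⟫ / 2)) := by
    intro n η ω
    have hs : S (n + 1) ω = S n ω + (Y n ω - μ) := by
      simp only [hS]; rw [Finset.sum_range_succ]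
    have hexp : (⟪η, S (n + 1) ω⟫ - ((n : ℝ) + 1) * σ * ⟪η, η⟫ / 2)
        = (⟪η, S n ω⟫ - n * σ * ⟪η, η⟫ / 2) + (⟪η, Y n ω - μ⟫ - σ * ⟪η, η⟫ / 2) := by
      rw [hs, inner_add_right]; ring
    simp only [hfdef]
    push_cast
    rw [hexp, Real.exp_add, ENNReal.ofReal_mul (Real.exp_pos _).le]
  -- independence
  have hindep' : ∀ n, Indep (F n) (MeasurableSpace.comap (Y n) inferInstance) P := by
    intro n
    have hiI : iIndep (fun i => MeasurableSpace.comap (Y i) inferInstance) P :=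
      (iIndepFun_iff_iIndep _ _ _).mp hindep
    have hbi := indep_biSup_compl (fun i => (hY i).comap_le) hiI {i | i < n}
    refine indep_of_indep_of_le_left (indep_of_indep_of_le_right hbi ?_) ?_
    · exact le_iSup₂ (f := fun i (_ : i ∈ {j | j < n}ᶜ) =>
        MeasurableSpace.comap (Y i) inferInstance) n (by simp)
    · exact iSup₂_le fun i hi => le_iSup₂ (f := fun j (_ : j ∈ {j | j < n}) =>
        MeasurableSpace.comap (Y j) inferInstance) i (by simpa using hi)
  -- transported mgf bound
  have hg0 : ∀ η : EuclideanSpace ℝ (Fin k),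
      Measurable fun x : EuclideanSpace ℝ (Fin k) => ENNReal.ofReal (Real.exp ⟪η, x - μ⟫) :=
    fun η => ENNReal.measurable_ofReal.comp (Real.measurable_exp.comp
      (Measurable.inner measurable_const (measurable_id.sub measurable_const)))
  have hmgfn : ∀ (n : ℕ) η, ‖η‖ ^ 2 ≤ δ →
      ∫⁻ ω, ENNReal.ofReal (Real.exp ⟪η, Y n ω - μ⟫) ∂P
        ≤ ENNReal.ofReal (Real.exp (σ * ⟪η, η⟫ / 2)) := by
    intro n η hη
    rw [← lintegral_map (hg0 η) (hY n), hident n, lintegral_map (hg0 η) (hY 0)]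
    exact hmgf η hη
  -- key one-step inequality against F n-measurable weights
  have key : ∀ (n : ℕ) (η : EuclideanSpace ℝ (Fin k)), ‖η‖ ^ 2 ≤ δ →
      ∀ G : Ω → ℝ≥0∞, Measurable[F n] G →
      ∫⁻ ω, G ω * ENNReal.ofReal (Real.exp (⟪η, Y n ω - μ⟫ - σ * ⟪η, η⟫ / 2)) ∂P
        ≤ ∫⁻ ω, G ω ∂P := by
    intro n η hη G hG
    have hW : Measurable[MeasurableSpace.comap (Y n) inferInstance]
        fun ω => ENNReal.ofReal (Real.exp (⟪η, Y n ω - μ⟫ - σ * ⟪η, η⟫ / 2)) := by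
      have hg : Measurable fun x : EuclideanSpace ℝ (Fin k) =>
          ENNReal.ofReal (Real.exp (⟪η, x - μ⟫ - σ * ⟪η, η⟫ / 2)) :=
        ENNReal.measurable_ofReal.comp (Real.measurable_exp.comp
          ((Measurable.inner measurable_const (measurable_id.sub measurable_const)).sub
            measurable_const))
      exact hg.comp (Measurable.of_comap_le le_rfl)
    rw [lintegral_mul_eq_lintegral_mul_lintegral_of_independent_measurableSpace
      (F.le n) ((hY n).comap_le) (hindep' n) hG hW]
    have h2 : ∫⁻ ω, ENNReal.ofReal (Real.exp (⟪η, Y n ω - μ⟫ - σ * ⟪η, η⟫ / 2)) ∂P ≤ 1 := by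
      have hsplit : ∀ ω, ENNReal.ofReal (Real.exp (⟪η, Y n ω - μ⟫ - σ * ⟪η, η⟫ / 2))
          = ENNReal.ofReal (Real.exp ⟪η, Y n ω - μ⟫)
            * ENNReal.ofReal (Real.exp (-(σ * ⟪η, η⟫ / 2))) := by
        intro ω
        rw [← ENNReal.ofReal_mul (Real.exp_pos _).le, ← Real.exp_add]
        ring_nf
      simp only [hsplit]
      have hgc : Measurable fun ω => ENNReal.ofReal (Real.exp ⟪η, Y n ω - μ⟫) :=
        (hg0 η).comp (hY n)
      rw [lintegral_mul_const _ hgc]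
      calc (∫⁻ ω, ENNReal.ofReal (Real.exp ⟪η, Y n ω - μ⟫) ∂P)
            * ENNReal.ofReal (Real.exp (-(σ * ⟪η, η⟫ / 2)))
          ≤ ENNReal.ofReal (Real.exp (σ * ⟪η, η⟫ / 2))
            * ENNReal.ofReal (Real.exp (-(σ * ⟪η, η⟫ / 2))) :=
            mul_le_mul_left (hmgfn n η hη) _
        _ = 1 := by
            rw [← ENNReal.ofReal_mul (Real.exp_pos _).le, ← Real.exp_add]
            simp
    calc (∫⁻ ω, G ω ∂P) * ∫⁻ ω, ENNReal.ofReal (Real.exp (⟪η, Y n ω - μ⟫ - σ * ⟪η, η⟫ / 2)) ∂P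
        ≤ (∫⁻ ω, G ω ∂P) * 1 := mul_le_mul_right h2 _
      _ = ∫⁻ ω, G ω ∂P := mul_one _
  -- set version
  have keyset : ∀ (n : ℕ) η, ‖η‖ ^ 2 ≤ δ → ∀ A : Set Ω, MeasurableSet[F n] A →
      ∫⁻ ω in A, f (n + 1) η ω ∂P ≤ ∫⁻ ω in A, f n η ω ∂P := by
    intro n η hη A hA
    have hA' : MeasurableSet A := F.le n A hA
    rw [← lintegral_indicator hA', ← lintegral_indicator hA']
    calc ∫⁻ ω, A.indicator (f (n + 1) η) ω ∂P
        = ∫⁻ ω, A.indicator (f n η) ω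
            * ENNReal.ofReal (Real.exp (⟪η, Y n ω - μ⟫ - σ * ⟪η, η⟫ / 2)) ∂P := by
          refine lintegral_congr fun ω => ?_
          by_cases hω : ω ∈ A <;> simp [hω, hstep]
      _ ≤ ∫⁻ ω, A.indicator (f n η) ω ∂P :=
          key n η hη _ ((hfmeasF n η).indicator hA)
  -- uniform bound
  have bound1 : ∀ (n : ℕ) η, ‖η‖ ^ 2 ≤ δ → ∫⁻ ω, f n η ω ∂P ≤ 1 := by
    intro n η hη
    induction n with
    | zero =>
      have h0 : ∀ ω, f 0 η ω = 1 := by intro ω; simp [hfdef, hS]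
      simp [h0]
    | succ n ih =>
      have h := keyset n η hη Set.univ MeasurableSet.univ
      rw [Measure.restrict_univ] at h
      exact h.trans ih
  -- Tonelli swaps
  have hswap : ∀ (n : ℕ) (m : Measure Ω), SFinite m →
      ∫⁻ ω, (∫⁻ η, f n η ω ∂γ) ∂m = ∫⁻ η, (∫⁻ ω, f n η ω ∂m) ∂γ := by
    intro n m hm
    exact lintegral_lintegral_swap (hjoint n).aemeasurable
  have hZl : ∀ n, Measurable fun ω => ∫⁻ η, f n η ω ∂γ := fun n =>
    (hjoint n).lintegral_prod_right'
  have hZlle1 : ∀ n, ∫⁻ ω, (∫⁻ η, f n η ω ∂γ) ∂P ≤ 1 := by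
    intro n
    rw [hswap n P inferInstance]
    calc ∫⁻ η, (∫⁻ ω, f n η ω ∂P) ∂γ ≤ ∫⁻ _, 1 ∂γ := by
          refine lintegral_mono_ae ?_
          filter_upwards [hγ] with η hη using bound1 n η hη
      _ = 1 := by simp
  have hfin : ∀ n, ∀ᵐ ω ∂P, (∫⁻ η, f n η ω ∂γ) < ⊤ := fun n =>
    ae_lt_top (hZl n) ((hZlle1 n).trans_lt ENNReal.one_lt_top).ne
  -- adaptedness
  have hadp : StronglyAdapted F Z := by
    intro n
    rw [hZ]
    exact aux_sm γ (hSmeas n) ((n : ℝ) * σ)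
  -- integrability
  have hints : ∀ n, Integrable (Z n) P := by
    intro n
    refine ⟨((hadp n).mono (F.le n)).aestronglyMeasurable, ?_⟩
    rw [hasFiniteIntegral_iff_ofReal (Eventually.of_forall (hZnn n))]
    calc ∫⁻ ω, ENNReal.ofReal (Z n ω) ∂P ≤ ∫⁻ ω, (∫⁻ η, f n η ω ∂γ) ∂P := by
          refine lintegral_mono fun ω => ?_
          rw [hZeq n ω]; exact ENNReal.ofReal_toReal_le
      _ ≤ 1 := hZlle1 n
      _ < ⊤ := ENNReal.one_lt_top
  -- set integral inequality
  have hsetZ : ∀ (n : ℕ) (A : Set Ω), MeasurableSet[F n] A →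
      ∫ ω in A, Z (n + 1) ω ∂P ≤ ∫ ω in A, Z n ω ∂P := by
    intro n A hA
    have hA' : MeasurableSet A := F.le n A hA
    have hInt : ∀ m : ℕ, ∫ ω in A, Z m ω ∂P
        = (∫⁻ ω in A, (∫⁻ η, f m η ω ∂γ) ∂P).toReal := by
      intro m
      simp only [hZeq]
      exact integral_toReal ((hZl m).aemeasurable.restrict)
        ((hfin m).filter_mono (ae_mono Measure.restrict_le_self))
    rw [hInt (n + 1), hInt n]
    have hlt : ∫⁻ ω in A, (∫⁻ η, f n η ω ∂γ) ∂P ≠ ⊤ :=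
      (((lintegral_mono' Measure.restrict_le_self le_rfl).trans (hZlle1 n)).trans_lt
        ENNReal.one_lt_top).ne
    refine ENNReal.toReal_mono hlt ?_
    rw [hswap (n + 1) (P.restrict A) inferInstance, hswap n (P.restrict A) inferInstance]
    refine lintegral_mono_ae ?_
    filter_upwards [hγ] with η hη using keyset n η hη A hA
  exact ⟨supermartingale_of_setIntegral_succ_le hadp hints hsetZ, hZnn, hZ0⟩
end

section
/- Let k ∈ ℕ, σ > 0, δ > 0 and let Y_1, Y_2, … be i.i.d. random vectors in ℝ^k with mean μ = E[Y_1], satisfying: for every η ∈ ℝ^k with ‖η‖² ≤ δ, E[exp(⟨η, Y_1 − μ⟩)] ≤ exp(σ·⟨η,η⟩/2). Set S_n = Σ_{i=1}^n (Y_i − μ). Then for any probability measure γ on the closed ball B_δ(0) = {η ∈ ℝ^k : ‖η‖² ≤ δ}, defining Z_n = ∫_{B_δ(0)} exp(⟨η, S_n⟩ − n·σ·⟨η,η⟩/2) dγ(η), one has E[ sup_{n∈ℕ} √(Z_n) ] ≤ 2. -/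
open MeasureTheory ProbabilityTheory Filter
open scoped RealInnerProductSpace

open Finset
open scoped NNReal ENNReal

section aux


theorem ville_aux {Ω : Type*} {m0 : MeasurableSpace Ω} {P : Measure Ω} [IsProbabilityMeasure P]
    {𝒢 : Filtration ℕ m0} {f : ℕ → Ω → ℝ} (hf : Supermartingale f 𝒢 P)
    (hnn : 0 ≤ f) (ε : ℝ≥0) (n : ℕ) :
    ε • P {ω | (ε : ℝ) ≤ (range (n + 1)).sup' nonempty_range_add_one fun k => f k ω} ≤
      ENNReal.ofReal (∫ ω, f 0 ω ∂P) := by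
  set τ : Ω → ℕ∞ := fun ω => ((hittingBtwn f {y : ℝ | (ε:ℝ) ≤ y} 0 n ω : ℕ) : ℕ∞) with hτdef
  have hτ : IsStoppingTime 𝒢 τ :=
    Adapted.isStoppingTime_hittingBtwn hf.1.adapted measurableSet_Ici
  have hτle : ∀ ω, τ ω ≤ n := fun ω => WithTop.coe_le_coe.2 (hittingBtwn_le ω)
  have hint : Integrable (stoppedValue f τ) P :=
    integrable_stoppedValue ℕ hτ hf.integrable hτle
  -- ε bound on the hitting set
  have hn : Set.Icc 0 n = {k | k ≤ n} := by ext x; simp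
  have hbd : ∀ ω, ((ε : ℝ) ≤ (range (n + 1)).sup' nonempty_range_add_one fun k => f k ω) →
      (ε : ℝ) ≤ stoppedValue f τ ω := by
    intro x hx
    simp_rw [le_sup'_iff, mem_range, Nat.lt_succ_iff] at hx
    refine stoppedValue_hittingBtwn_mem ?_
    simp only [Set.mem_setOf_eq, exists_prop, hn]
    exact let ⟨j, hj₁, hj₂⟩ := hx; ⟨j, hj₁, hj₂⟩
  have hmeas : MeasurableSet {ω | (ε : ℝ) ≤ (range (n + 1)).sup' nonempty_range_add_one
      fun k => f k ω} :=
    measurableSet_le measurable_const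
      (Finset.measurable_range_sup'' fun m _ => (hf.stronglyMeasurable m).measurable.le (𝒢.le m))
  have h1 : ε • P {ω | (ε : ℝ) ≤ (range (n + 1)).sup' nonempty_range_add_one fun k => f k ω} ≤
      ENNReal.ofReal (∫ ω in {ω | (ε : ℝ) ≤ (range (n + 1)).sup' nonempty_range_add_one
        fun k => f k ω}, stoppedValue f τ ω ∂P) := by
    have h := setIntegral_ge_of_const_le hmeas (measure_ne_top _ _) hbd hint.integrableOn
    rw [ENNReal.le_ofReal_iff_toReal_le, ENNReal.toReal_smul]
    · simpa only [NNReal.smul_def, smul_eq_mul, Measure.real, mul_comm] using h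
    · exact ENNReal.mul_ne_top (by simp) (measure_ne_top _ _)
    · exact le_trans (by positivity) h
  refine h1.trans (ENNReal.ofReal_le_ofReal ?_)
  have h2 : ∫ ω in {ω | (ε : ℝ) ≤ (range (n + 1)).sup' nonempty_range_add_one fun k => f k ω},
      stoppedValue f τ ω ∂P ≤ ∫ ω, stoppedValue f τ ω ∂P := by
    refine setIntegral_le_integral hint ?_
    filter_upwards with ω
    exact hnn _ ω
  refine h2.trans ?_
  -- optional stopping for the supermartingale
  have hneg := hf.neg.expected_stoppedValue_mono (isStoppingTime_const 𝒢 0) hτ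
    (fun ω => WithTop.coe_le_coe.2 (Nat.zero_le _)) hτle
  have e0 : stoppedValue (-f) (fun _ => ((0:ℕ) : WithTop ℕ)) = fun ω => -(f 0 ω) := rfl
  have e1 : stoppedValue (-f) τ = fun ω => -(stoppedValue f τ ω) := rfl
  replace hneg : ∫ x, -(f 0 x) ∂P ≤ ∫ x, -(stoppedValue f τ x) ∂P := hneg
  rw [integral_neg, integral_neg, neg_le_neg_iff] at hneg
  exact hneg

theorem ville_tail {Ω : Type*} {m0 : MeasurableSpace Ω} {P : Measure Ω} [IsProbabilityMeasure P]
    {𝒢 : Filtration ℕ m0} {f : ℕ → Ω → ℝ} (hf : Supermartingale f 𝒢 P)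
    (hnn : 0 ≤ f) (a : ℝ≥0) :
    (a : ℝ≥0∞) * P {ω | ∃ n, (a : ℝ) ≤ f n ω} ≤ ENNReal.ofReal (∫ ω, f 0 ω ∂P) := by
  have hset : {ω | ∃ n, (a : ℝ) ≤ f n ω} =
      ⋃ N, {ω | (a : ℝ) ≤ (range (N + 1)).sup' nonempty_range_add_one fun k => f k ω} := by
    ext ω
    simp only [Set.mem_setOf_eq, Set.mem_iUnion]
    constructor
    · rintro ⟨n, hn⟩
      exact ⟨n, le_sup'_of_le _ (self_mem_range_succ n) hn⟩
    · rintro ⟨N, hN⟩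
      obtain ⟨k, -, hk⟩ := (le_sup'_iff _).1 hN
      exact ⟨k, hk⟩
  have hmono : Monotone (fun N => {ω | (a : ℝ) ≤ (range (N + 1)).sup' nonempty_range_add_one
      fun k => f k ω} : ℕ → Set Ω) := by
    intro M N hMN
    intro ω hω
    simp only [Set.mem_setOf_eq] at hω ⊢
    exact le_trans hω (Finset.sup'_le _ _ fun k hk =>
      le_sup'_of_le _ (mem_range.2 ((mem_range.1 hk).trans_le (by omega : M + 1 ≤ N + 1))) le_rfl)
  rw [hset, hmono.directed_le.measure_iUnion, ENNReal.mul_iSup]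
  exact iSup_le fun N => ville_aux hf hnn a N


-- pointwise geometric slicing bound
theorem pointwise_slice {x r : ℝ} (hx : 0 ≤ x) (hr : 1 < r)
    {g : ℕ → ℝ≥0∞} (hg : ∀ j : ℕ, r ^ j < x → ENNReal.ofReal ((r - 1) * r ^ j) ≤ g j) :
    ENNReal.ofReal x ≤ ENNReal.ofReal r + ∑' j, g j := by
  rcases le_or_gt x r with h | h
  · exact le_add_right (ENNReal.ofReal_le_ofReal h) -- check lemma
  · -- find minimal N with x ≤ r ^ N
    have hex : ∃ N : ℕ, x ≤ r ^ N := by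
      obtain ⟨N, hN⟩ := pow_unbounded_of_one_lt x hr
      exact ⟨N, hN.le⟩
    classical
    set N := Nat.find hex with hN
    have hxN : x ≤ r ^ N := Nat.find_spec hex
    have hNpos : 0 < N := by
      rcases Nat.eq_zero_or_pos N with h0 | h0
      · exfalso
        have := hxN
        rw [h0, pow_zero] at this
        linarith
      · exact h0
    set m := N - 1 with hm
    have hmN : m + 1 = N := Nat.succ_pred_eq_of_pos hNpos
    have hlt : ∀ j ≤ m, r ^ j < x := by
      intro j hj
      by_contra hcon
      push_neg at hcon
      have hle : N ≤ j := Nat.find_le hcon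
      omega
    have hsum : ∑ j ∈ range (m + 1), ENNReal.ofReal ((r - 1) * r ^ j)
        ≤ ∑' j, g j := by
      refine le_trans (Finset.sum_le_sum fun j hj => hg j (hlt j (by
        simpa [Nat.lt_succ_iff] using hj))) ?_
      exact Summable.sum_le_tsum _ (fun _ _ => zero_le) ENNReal.summable
    have hsum' : ∑ j ∈ range (m + 1), ENNReal.ofReal ((r - 1) * r ^ j)
        = ENNReal.ofReal (r ^ (m + 1) - 1) := by
      rw [← ENNReal.ofReal_sum_of_nonneg]
      · congr 1
        have := geom_sum_mul (x := r) (n := m + 1)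
        calc ∑ j ∈ range (m + 1), (r - 1) * r ^ j
            = (∑ j ∈ range (m + 1), r ^ j) * (r - 1) := by
              rw [Finset.sum_mul]; exact Finset.sum_congr rfl fun j _ => mul_comm _ _
          _ = r ^ (m + 1) - 1 := this
      · intro j _
        have : (0:ℝ) ≤ r ^ j := pow_nonneg (by linarith) j
        nlinarith
    calc ENNReal.ofReal x ≤ ENNReal.ofReal (r + (r ^ (m + 1) - 1)) := by
          refine ENNReal.ofReal_le_ofReal ?_
          have : x ≤ r ^ N := hxN
          rw [← hmN] at this
          linarith
      _ = ENNReal.ofReal r + ENNReal.ofReal (r ^ (m + 1) - 1) := by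
          rw [ENNReal.ofReal_add (by linarith)]
          have hpow : (1:ℝ) ≤ r ^ (m + 1) := one_le_pow₀ (by linarith)
          linarith
      _ ≤ ENNReal.ofReal r + ∑' j, g j := by
          rw [← hsum']; exact add_le_add_right hsum _

theorem assembly {Ω : Type*} {m0 : MeasurableSpace Ω} {P : Measure Ω} [IsProbabilityMeasure P]
    {Z : ℕ → Ω → ℝ} (hm : ∀ n, Measurable (Z n)) (hnn : ∀ n ω, 0 ≤ Z n ω)
    (tail : ∀ a : ℝ≥0, (a : ℝ≥0∞) * P {ω | ∃ n, (a : ℝ) ≤ Z n ω} ≤ 1) :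
    ∫⁻ ω, ⨆ n, ENNReal.ofReal (Real.sqrt (Z n ω)) ∂P ≤ 2 := by
  -- it suffices to show the bound 2r for every r > 1
  have key : ∀ r : ℝ, 1 < r →
      ∫⁻ ω, ⨆ n, ENNReal.ofReal (Real.sqrt (Z n ω)) ∂P ≤ ENNReal.ofReal (2 * r) := by
    intro r hr
    set A : ℕ → Set Ω := fun j => {ω | ∃ n, (r ^ (2 * j) : ℝ) ≤ Z n ω} with hA
    have hAmeas : ∀ j, MeasurableSet (A j) := by
      intro j
      have : A j = ⋃ n, {ω | (r ^ (2 * j) : ℝ) ≤ Z n ω} := by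
        ext ω; simp [hA]
      rw [this]
      exact MeasurableSet.iUnion fun n => measurableSet_le measurable_const (hm n)
    have hApow : ∀ j : ℕ, P (A j) ≤ (ENNReal.ofReal (r ^ (2 * j)))⁻¹ := by
      intro j
      have h2 := tail (r ^ (2 * j)).toNNReal
      have hpow : (0:ℝ) < r ^ (2 * j) := pow_pos (by linarith) _
      rw [Real.coe_toNNReal _ hpow.le] at h2
      rw [ENNReal.le_inv_iff_mul_le, mul_comm]
      exact h2
    -- pointwise bound
    have hpt : ∀ ω, (⨆ n, ENNReal.ofReal (Real.sqrt (Z n ω)))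
        ≤ ENNReal.ofReal r + ∑' j, (A j).indicator
            (fun _ => ENNReal.ofReal ((r - 1) * r ^ j)) ω := by
      intro ω
      refine iSup_le fun n => ?_
      refine pointwise_slice (Real.sqrt_nonneg _) hr fun j hj => ?_
      have hmem : ω ∈ A j := by
        refine ⟨n, ?_⟩
        have h1 : (r ^ j) ^ 2 < Real.sqrt (Z n ω) ^ 2 := by
          have h0 : (0:ℝ) ≤ r ^ j := pow_nonneg (by linarith) _
          nlinarith [Real.sqrt_nonneg (Z n ω)]
        have h2 : Real.sqrt (Z n ω) ^ 2 = Z n ω := Real.sq_sqrt (hnn n ω)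
        calc (r ^ (2 * j) : ℝ) = (r ^ j) ^ 2 := by rw [← pow_mul, mul_comm]
          _ ≤ Z n ω := by rw [← h2]; exact h1.le
      rw [Set.indicator_of_mem hmem]
    calc ∫⁻ ω, ⨆ n, ENNReal.ofReal (Real.sqrt (Z n ω)) ∂P
        ≤ ∫⁻ ω, (ENNReal.ofReal r + ∑' j, (A j).indicator
            (fun _ => ENNReal.ofReal ((r - 1) * r ^ j)) ω) ∂P := lintegral_mono hpt
      _ = ENNReal.ofReal r + ∑' j, ENNReal.ofReal ((r - 1) * r ^ j) * P (A j) := by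
          rw [lintegral_add_left measurable_const, lintegral_const]
          simp only [measure_univ, mul_one]
          congr 1
          rw [lintegral_tsum fun j => ((measurable_const).indicator (hAmeas j)).aemeasurable]
          congr 1
          ext j
          rw [lintegral_indicator (hAmeas j), setLIntegral_const]
      _ ≤ ENNReal.ofReal r + ∑' j : ℕ, ENNReal.ofReal ((r - 1) * r⁻¹ ^ j) := by
          refine add_le_add_right (ENNReal.tsum_le_tsum fun j => ?_) _
          have hrj : (0:ℝ) < r ^ j := pow_pos (by linarith) _
          have hr2j : (0:ℝ) < r ^ (2 * j) := pow_pos (by linarith) _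
          calc ENNReal.ofReal ((r - 1) * r ^ j) * P (A j)
              ≤ ENNReal.ofReal ((r - 1) * r ^ j) * (ENNReal.ofReal (r ^ (2 * j)))⁻¹ :=
                mul_le_mul_right (hApow j) _
            _ = ENNReal.ofReal ((r - 1) * r ^ j) * ENNReal.ofReal ((r ^ (2 * j))⁻¹) := by
                rw [ENNReal.ofReal_inv_of_pos hr2j]
            _ = ENNReal.ofReal ((r - 1) * r ^ j * (r ^ (2 * j))⁻¹) := by
                rw [← ENNReal.ofReal_mul (by nlinarith)]
            _ = ENNReal.ofReal ((r - 1) * r⁻¹ ^ j) := by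
                congr 1
                rw [inv_pow]
                field_simp
                ring
      _ ≤ ENNReal.ofReal (2 * r) := by
          have hinv : (r:ℝ)⁻¹ < 1 := inv_lt_one_of_one_lt₀ hr
          have hinv0 : (0:ℝ) ≤ r⁻¹ := by positivity
          have hnn' : ∀ j : ℕ, 0 ≤ (r - 1) * r⁻¹ ^ j := fun j =>
            mul_nonneg (by linarith) (by positivity)
          have hsumm : Summable (fun j : ℕ => (r - 1) * r⁻¹ ^ j) :=
            (summable_geometric_of_lt_one hinv0 hinv).mul_left _
          rw [← ENNReal.ofReal_tsum_of_nonneg hnn' hsumm,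
            ← ENNReal.ofReal_add (by linarith) (tsum_nonneg hnn')]
          refine ENNReal.ofReal_le_ofReal ?_
          rw [tsum_mul_left, tsum_geometric_of_lt_one hinv0 hinv]
          have h1 : (1 - r⁻¹)⁻¹ = r / (r - 1) := by field_simp
          have h2 : (r - 1) * (r / (r - 1)) = r := by
            rw [mul_comm, div_mul_cancel₀ _ (by linarith : r - 1 ≠ 0)]
          rw [h1, h2]; linarith
  refine ENNReal.le_of_forall_pos_le_add fun ε hε _ => ?_
  have hr : (1:ℝ) < 1 + (ε : ℝ) / 2 := by
    have : (0:ℝ) < (ε : ℝ) := hε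
    linarith
  refine (key _ hr).trans ?_
  have : (2:ℝ) * (1 + (ε : ℝ) / 2) = 2 + (ε : ℝ) := by ring
  rw [this, ENNReal.ofReal_add (by norm_num) (by positivity)]
  have h2 : ENNReal.ofReal (2:ℝ) = 2 := by norm_num
  have h3 : ENNReal.ofReal ((ε : ℝ≥0) : ℝ) = (ε : ℝ≥0∞) := ENNReal.ofReal_coe_nnreal
  rw [h2, h3]

end aux

set_option maxHeartbeats 1000000 in
theorem expectation_sup_sqrt_mixture_le_two
    (k : ℕ) (σ δ : ℝ) (hσ : 0 < σ) (hδ : 0 < δ)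
    (Ω : Type) [mΩ : MeasurableSpace Ω] (P : Measure Ω) [IsProbabilityMeasure P]
    (Y : ℕ → Ω → EuclideanSpace ℝ (Fin k)) (hY : ∀ i, Measurable (Y i))
    (hindep : iIndepFun Y P)
    (hident : ∀ i, Measure.map (Y i) P = Measure.map (Y 0) P)
    (μ : EuclideanSpace ℝ (Fin k)) (hint : Integrable (Y 0) P) (hμ : μ = ∫ ω, Y 0 ω ∂P)
    (hmgf : ∀ η : EuclideanSpace ℝ (Fin k), ‖η‖ ^ 2 ≤ δ →
      ∫⁻ ω, ENNReal.ofReal (Real.exp ⟪η, Y 0 ω - μ⟫) ∂P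
        ≤ ENNReal.ofReal (Real.exp (σ * ⟪η, η⟫ / 2)))
    (γ : Measure (EuclideanSpace ℝ (Fin k))) [IsProbabilityMeasure γ]
    (hγ : ∀ᵐ η ∂γ, ‖η‖ ^ 2 ≤ δ)
    (S : ℕ → Ω → EuclideanSpace ℝ (Fin k))
    (hS : S = fun n ω => ∑ i ∈ Finset.range n, (Y i ω - μ))
    (Z : ℕ → Ω → ℝ)
    (hZ : Z = fun n ω => ∫ η, Real.exp (⟪η, S n ω⟫ - n * σ * ⟪η, η⟫ / 2) ∂γ) :
    ∫⁻ ω, ⨆ n : ℕ, ENNReal.ofReal (Real.sqrt (Z n ω)) ∂P ≤ 2 := by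
  -- measurability of S
  have hSmeas : ∀ n, Measurable (S n) := by
    intro n; rw [hS]
    exact Finset.measurable_sum _ fun i _ => (hY i).sub measurable_const
  -- the filtration generated by initial segments of Y
  have hTmeas : ∀ n : ℕ, Measurable (fun ω (i : Finset.range n) => Y (i : ℕ) ω) := by
    intro n
    exact measurable_pi_lambda _ fun i => hY i
  set 𝒢 : Filtration ℕ mΩ :=
    { seq := fun n => MeasurableSpace.comap (fun ω (i : Finset.range n) => Y (i : ℕ) ω)
        inferInstance
      mono' := by
        intro m n hmn s hs
        obtain ⟨t, ht, rfl⟩ := hs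
        refine ⟨(fun (v : (i : Finset.range n) → EuclideanSpace ℝ (Fin k)) (i : Finset.range m) =>
          v ⟨(i : ℕ), Finset.mem_range.2 ((Finset.mem_range.1 i.2).trans_le hmn)⟩) ⁻¹' t,
          ?_, rfl⟩
        exact (measurable_pi_lambda _ fun i => measurable_pi_apply _) ht
      le' := fun n => (hTmeas n).comap_le } with h𝒢
  -- S n is 𝒢 n measurable
  have hS𝒢 : ∀ n, Measurable[𝒢 n] (S n) := by
    intro n
    have : S n = (fun v : (i : Finset.range n) → EuclideanSpace ℝ (Fin k) =>
        ∑ i ∈ (Finset.range n).attach, (v i - μ)) ∘ (fun ω (i : Finset.range n) => Y (i : ℕ) ω) := by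
      funext ω
      rw [hS]
      simp only [Function.comp_apply]
      rw [← Finset.sum_attach (Finset.range n) (fun i => Y i ω - μ)]
    rw [this]
    have h1 : Measurable (fun v : (i : Finset.range n) → EuclideanSpace ℝ (Fin k) =>
        ∑ i ∈ (Finset.range n).attach, (v i - μ)) :=
      Finset.measurable_sum _ fun i _ => (measurable_pi_apply _).sub measurable_const
    exact h1.comp (Measurable.of_comap_le le_rfl)
  -- the ℝ≥0∞-valued kernel and mixture
  set e : ℕ → EuclideanSpace ℝ (Fin k) → Ω → ℝ≥0∞ := fun n η ω =>
    ENNReal.ofReal (Real.exp (⟪η, S n ω⟫ - n * σ * ⟪η, η⟫ / 2)) with he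
  set W : ℕ → Ω → ℝ≥0∞ := fun n ω => ∫⁻ η, e n η ω ∂γ with hW
  -- joint measurability
  have hemeas : ∀ n, Measurable (fun p : EuclideanSpace ℝ (Fin k) × Ω => e n p.1 p.2) := by
    intro n
    refine ENNReal.measurable_ofReal.comp (Real.measurable_exp.comp (Measurable.sub ?_ ?_))
    · exact Measurable.inner measurable_fst ((hSmeas n).comp measurable_snd)
    · exact ((Measurable.inner measurable_fst measurable_fst).const_mul _).div_const _
  -- Z n ω is the real version of W n ω
  have hZnn : ∀ n ω, 0 ≤ Z n ω := by
    intro n ω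
    rw [hZ]
    exact integral_nonneg fun η => (Real.exp_pos _).le
  have hγint : ∀ n (ω : Ω), Integrable
      (fun η : EuclideanSpace ℝ (Fin k) => Real.exp (⟪η, S n ω⟫ - n * σ * ⟪η, η⟫ / 2)) γ := by
    intro n ω
    refine Integrable.mono' (integrable_const (Real.exp (Real.sqrt δ * ‖S n ω‖))) ?_ ?_
    · refine Continuous.aestronglyMeasurable ?_
      exact Real.continuous_exp.comp ((continuous_id.inner continuous_const).sub
        ((continuous_const.mul (continuous_id.inner continuous_id)).div_const _))
    · filter_upwards [hγ] with η hη
      rw [Real.norm_eq_abs, abs_of_pos (Real.exp_pos _)]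
      refine Real.exp_le_exp.2 ?_
      have h1 : ⟪η, S n ω⟫ ≤ ‖η‖ * ‖S n ω‖ := real_inner_le_norm _ _
      have h2 : ‖η‖ ≤ Real.sqrt δ := by
        rw [← Real.sqrt_sq (norm_nonneg η)]
        exact Real.sqrt_le_sqrt hη
      have h3 : 0 ≤ (n : ℝ) * σ * ⟪η, η⟫ / 2 := by
        have : (0:ℝ) ≤ ⟪η, η⟫ := real_inner_self_nonneg
        positivity
      nlinarith [norm_nonneg (S n ω)]
  have hWZ : ∀ n ω, ENNReal.ofReal (Z n ω) = W n ω := by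
    intro n ω
    rw [hZ, hW]
    exact ofReal_integral_eq_lintegral_ofReal (hγint n ω)
      (Filter.Eventually.of_forall fun η => (Real.exp_pos _).le)
  -- independence of 𝒢 n and Y n
  have hind : ∀ n, Indep (𝒢 n) (MeasurableSpace.comap (Y n) inferInstance) P := by
    intro n
    have h1 := hindep.indepFun_finset (Finset.range n) {n}
      (by simp [Finset.disjoint_singleton_right]) hY
    rw [IndepFun_iff_Indep] at h1
    refine indep_of_indep_of_le_right h1 ?_
    intro s hs
    obtain ⟨t, ht, rfl⟩ := hs
    refine ⟨(fun v : (i : ({n} : Finset ℕ)) → EuclideanSpace ℝ (Fin k) => v ⟨n, Finset.mem_singleton_self n⟩) ⁻¹' t,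
      (measurable_pi_apply _) ht, rfl⟩
  -- the key supermartingale step, in ℝ≥0∞ form
  have step : ∀ n (A : Set Ω), MeasurableSet[𝒢 n] A →
      ∫⁻ ω in A, W (n + 1) ω ∂P ≤ ∫⁻ ω in A, W n ω ∂P := by
    intro n A hA
    have hA' : MeasurableSet A := 𝒢.le n A hA
    have hswap : ∀ m : ℕ, ∫⁻ ω in A, W m ω ∂P = ∫⁻ η, ∫⁻ ω in A, e m η ω ∂P ∂γ := by
      intro m
      rw [hW]
      exact lintegral_lintegral_swap
        (((hemeas m).comp measurable_swap).aemeasurable)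
    rw [hswap (n + 1), hswap n]
    refine lintegral_mono_ae ?_
    filter_upwards [hγ] with η hη
    -- notation
    set q : ℝ := ⟪η, η⟫ with hq
    have hq0 : 0 ≤ q := real_inner_self_nonneg
    set c : ℝ≥0∞ := ENNReal.ofReal (Real.exp (σ * q / 2)) with hc
    have hc0 : c ≠ 0 := by
      rw [hc]; simp [Real.exp_pos]
    have hctop : c ≠ ⊤ := by rw [hc]; exact ENNReal.ofReal_ne_top
    -- split the exponential
    have hsplit : ∀ ω, e (n + 1) η ω =
        (e n η ω * ENNReal.ofReal (Real.exp ⟪η, Y n ω - μ⟫)) * c⁻¹ := by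
      intro ω
      have hSsucc : S (n + 1) ω = S n ω + (Y n ω - μ) := by
        rw [hS]; exact Finset.sum_range_succ _ n
      have hinner : ⟪η, S (n + 1) ω⟫ = ⟪η, S n ω⟫ + ⟪η, Y n ω - μ⟫ := by
        rw [hSsucc, inner_add_right]
      have hexp : Real.exp (⟪η, S (n + 1) ω⟫ - (n + 1 : ℕ) * σ * q / 2) =
          (Real.exp (⟪η, S n ω⟫ - n * σ * q / 2) * Real.exp ⟪η, Y n ω - μ⟫) *
            (Real.exp (σ * q / 2))⁻¹ := by
        rw [← Real.exp_neg, ← Real.exp_add, ← Real.exp_add]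
        congr 1
        rw [hinner]
        push_cast
        ring
      rw [he]
      simp only
      rw [hexp, ENNReal.ofReal_mul (by positivity), ENNReal.ofReal_mul (by positivity),
        ENNReal.ofReal_inv_of_pos (Real.exp_pos _), ← hc]
    -- indicator form
    have hind_eq : ∫⁻ ω in A, e (n + 1) η ω ∂P =
        (∫⁻ ω, (A.indicator (fun ω => e n η ω) ω *
          ENNReal.ofReal (Real.exp ⟪η, Y n ω - μ⟫)) ∂P) * c⁻¹ := by
      rw [← lintegral_indicator hA', ← lintegral_mul_const' _ _ (by simpa using hc0)]
      congr 1
      funext ω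
      by_cases hω : ω ∈ A
      · rw [Set.indicator_of_mem hω, Set.indicator_of_mem hω, hsplit ω]
      · rw [Set.indicator_of_notMem hω, Set.indicator_of_notMem hω, zero_mul, zero_mul]
    rw [hind_eq]
    -- independence factorization
    have hfmeas : Measurable[𝒢 n] (A.indicator (fun ω => e n η ω)) := by
      refine Measurable.indicator ?_ hA
      exact ENNReal.measurable_ofReal.comp (Real.measurable_exp.comp
        (((Measurable.inner measurable_const (hS𝒢 n)).sub measurable_const)))
    have hgmeas : Measurable[MeasurableSpace.comap (Y n) inferInstance]
        (fun ω => ENNReal.ofReal (Real.exp ⟪η, Y n ω - μ⟫)) := by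
      refine Measurable.comp (f := Y n)
        (g := fun v => ENNReal.ofReal (Real.exp ⟪η, v - μ⟫)) ?_ (Measurable.of_comap_le le_rfl)
      exact ENNReal.measurable_ofReal.comp (Real.measurable_exp.comp
        ((measurable_const.inner (measurable_id.sub measurable_const))))
    have hfact := lintegral_mul_eq_lintegral_mul_lintegral_of_independent_measurableSpace
      (𝒢.le n) ((hY n).comap_le) (hind n) hfmeas hgmeas
    rw [hfact]
    -- the mgf bound
    have hmgfn : ∫⁻ ω, ENNReal.ofReal (Real.exp ⟪η, Y n ω - μ⟫) ∂P ≤ c := by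
      have hmap : ∀ m : ℕ, ∫⁻ ω, ENNReal.ofReal (Real.exp ⟪η, Y m ω - μ⟫) ∂P =
          ∫⁻ v, ENNReal.ofReal (Real.exp ⟪η, v - μ⟫) ∂(Measure.map (Y m) P) := by
        intro m
        have hF : Measurable (fun v : EuclideanSpace ℝ (Fin k) =>
            ENNReal.ofReal (Real.exp ⟪η, v - μ⟫)) :=
          ENNReal.measurable_ofReal.comp (Real.measurable_exp.comp
            ((measurable_const.inner (measurable_id.sub measurable_const))))
        rw [lintegral_map hF (hY m)]
      rw [hmap n, hident n, ← hmap 0]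
      exact hmgf η hη
    calc (∫⁻ ω, A.indicator (fun ω => e n η ω) ω ∂P) *
          (∫⁻ ω, ENNReal.ofReal (Real.exp ⟪η, Y n ω - μ⟫) ∂P) * c⁻¹
        ≤ (∫⁻ ω, A.indicator (fun ω => e n η ω) ω ∂P) * c * c⁻¹ := by
          exact mul_le_mul_left (mul_le_mul_right hmgfn _) _
      _ = ∫⁻ ω, A.indicator (fun ω => e n η ω) ω ∂P := by
          rw [mul_assoc, ENNReal.mul_inv_cancel hc0 hctop, mul_one]
      _ = ∫⁻ ω in A, e n η ω ∂P := lintegral_indicator hA' _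
  -- Z 0 = 1
  have hZ0 : Z 0 = fun _ => (1 : ℝ) := by
    funext ω
    rw [hZ]
    simp only [hS, Finset.range_zero, Finset.sum_empty, inner_zero_right, Nat.cast_zero,
      zero_mul, zero_div, sub_zero, zero_mul]
    simp [Real.exp_zero]
  -- expected value of W n is at most 1
  have hW1 : ∀ n, ∫⁻ ω, W n ω ∂P ≤ 1 := by
    intro n
    induction n with
    | zero =>
        have : ∀ ω, W 0 ω = 1 := by
          intro ω
          rw [← hWZ 0 ω, hZ0]
          simp
        simp only [this]
        simp
    | succ n ih =>
        have := step n Set.univ MeasurableSet.univ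
        rw [setLIntegral_univ, setLIntegral_univ] at this
        exact this.trans ih
  -- Z n is measurable and integrable
  have hφ : ∀ n, StronglyMeasurable (fun v : EuclideanSpace ℝ (Fin k) =>
      ∫ η, Real.exp (⟪η, v⟫ - n * σ * ⟪η, η⟫ / 2) ∂γ) := by
    intro n
    refine StronglyMeasurable.integral_prod_right' (f := fun p : EuclideanSpace ℝ (Fin k) × EuclideanSpace ℝ (Fin k) =>
      Real.exp (⟪p.2, p.1⟫ - n * σ * ⟪p.2, p.2⟫ / 2)) ?_
    refine Continuous.stronglyMeasurable ?_
    exact Real.continuous_exp.comp ((continuous_snd.inner continuous_fst).sub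
      ((continuous_const.mul (continuous_snd.inner continuous_snd)).div_const _))
  have hZ𝒢 : ∀ n, StronglyMeasurable[𝒢 n] (Z n) := by
    intro n
    have : Z n = (fun v : EuclideanSpace ℝ (Fin k) => ∫ η, Real.exp (⟪η, v⟫ - n * σ * ⟪η, η⟫ / 2) ∂γ) ∘ (S n) := by
      funext ω; rw [hZ]; rfl
    rw [this]
    exact (hφ n).comp_measurable (hS𝒢 n)
  have hZmeas : ∀ n, Measurable (Z n) := fun n =>
    ((hZ𝒢 n).mono (𝒢.le n)).measurable
  have hZint : ∀ n, Integrable (Z n) P := by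
    intro n
    refine ⟨((hZ𝒢 n).mono (𝒢.le n)).aestronglyMeasurable, ?_⟩
    rw [hasFiniteIntegral_iff_norm]
    calc ∫⁻ ω, ENNReal.ofReal ‖Z n ω‖ ∂P = ∫⁻ ω, W n ω ∂P := by
          refine lintegral_congr fun ω => ?_
          rw [Real.norm_eq_abs, abs_of_nonneg (hZnn n ω), hWZ]
      _ ≤ 1 := hW1 n
      _ < ⊤ := ENNReal.one_lt_top
  -- the supermartingale property
  have hsuper : Supermartingale Z 𝒢 P := by
    refine supermartingale_of_setIntegral_succ_le (fun n => hZ𝒢 n) hZint ?_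
    intro n A hA
    have hA' : MeasurableSet A := 𝒢.le n A hA
    have h1 : ENNReal.ofReal (∫ ω in A, Z (n + 1) ω ∂P) ≤
        ENNReal.ofReal (∫ ω in A, Z n ω ∂P) := by
      rw [ofReal_integral_eq_lintegral_ofReal ((hZint (n + 1)).restrict)
          (Filter.Eventually.of_forall fun ω => hZnn (n + 1) ω),
        ofReal_integral_eq_lintegral_ofReal ((hZint n).restrict)
          (Filter.Eventually.of_forall fun ω => hZnn n ω)]
      calc ∫⁻ ω in A, ENNReal.ofReal (Z (n + 1) ω) ∂P
          = ∫⁻ ω in A, W (n + 1) ω ∂P := by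
            refine lintegral_congr fun ω => hWZ _ _
        _ ≤ ∫⁻ ω in A, W n ω ∂P := step n A hA
        _ = ∫⁻ ω in A, ENNReal.ofReal (Z n ω) ∂P := by
            refine lintegral_congr fun ω => (hWZ _ _).symm
    exact (ENNReal.ofReal_le_ofReal_iff (integral_nonneg fun ω => hZnn n ω)).1 h1
  -- the tail bound
  have tail : ∀ a : ℝ≥0, (a : ℝ≥0∞) * P {ω | ∃ n, (a : ℝ) ≤ Z n ω} ≤ 1 := by
    intro a
    refine (ville_tail hsuper (fun n ω => hZnn n ω) a).trans ?_
    rw [hZ0]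
    simp
  exact assembly hZmeas hZnn tail
end
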